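/- (Blindness of score matching to isolated components in the model.) Fix μ₁ < μ₂ ∈ ℝ and π ∈ (0,1). Let q_σ(x) = φ_{μ₁,σ}(x) and p_σ(x) = π φ_{μ₁,σ}(x) + (1−π) φ_{μ₂,σ}(x). Then the Fisher divergence J(q_σ ‖ p_σ) → 0 as σ → 0⁺, regardless of the mixing proportion π. -/

import Mathlib

open MeasureTheory Filter ProbabilityTheory

/-- Gaussian density with mean `μ` and standard deviation `σ`. -/
noncomputable def gaussian (μ σ : ℝ) (x : ℝ) : ℝ :=
  (σ * Real.sqrt (2 * Real.pi))⁻¹ * Real.exp (-(x - μ) ^ 2 / (2 * σ ^ 2))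

/-- The score of a density `ρ`: the derivative of its log. -/
noncomputable def score (ρ : ℝ → ℝ) (x : ℝ) : ℝ :=
  deriv (fun y => Real.log (ρ y)) x

/-- Fisher divergence between densities `q` and `p`. -/
noncomputable def fisherDiv (q p : ℝ → ℝ) : ℝ :=
  ∫ x : ℝ, q x * (score q x - score p x) ^ 2

lemma gaussian_pos (m σ x : ℝ) (hσ : 0 < σ) : 0 < gaussian m σ x := by
  unfold gaussian; positivity

lemma hasDerivAt_gaussian (m σ x : ℝ) (hσ : 0 < σ) :
    HasDerivAt (gaussian m σ) (gaussian m σ x * ((m - x) / σ ^ 2)) x := by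
  have h1 : HasDerivAt (fun y : ℝ => -(y - m) ^ 2 / (2 * σ ^ 2)) ((m - x) / σ ^ 2) x := by
    have h0 : HasDerivAt (fun y : ℝ => (y - m) ^ 2) (2 * (x - m)) x := by
      simpa using (((hasDerivAt_id x).sub_const m).fun_pow 2)
    have := (h0.neg).div_const (2 * σ ^ 2)
    refine this.congr_deriv ?_
    field_simp
    ring
  have := (h1.exp).const_mul ((σ * Real.sqrt (2 * Real.pi))⁻¹)
  refine this.congr_deriv ?_
  unfold gaussian
  ring

lemma score_gaussian (m σ x : ℝ) (hσ : 0 < σ) :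
    score (gaussian m σ) x = (m - x) / σ ^ 2 := by
  have h := (hasDerivAt_gaussian m σ x hσ).log (gaussian_pos m σ x hσ).ne'
  rw [score, h.deriv]
  field_simp [(gaussian_pos m σ x hσ).ne']

lemma score_mix (μ₁ μ₂ w σ x : ℝ) (hσ : 0 < σ) (hw : w ∈ Set.Ioo (0:ℝ) 1) :
    score (fun y => w * gaussian μ₁ σ y + (1 - w) * gaussian μ₂ σ y) x =
      (w * (gaussian μ₁ σ x * ((μ₁ - x) / σ ^ 2)) +
        (1 - w) * (gaussian μ₂ σ x * ((μ₂ - x) / σ ^ 2))) /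
      (w * gaussian μ₁ σ x + (1 - w) * gaussian μ₂ σ x) := by
  obtain ⟨hw0, hw1⟩ := hw
  have hp : 0 < w * gaussian μ₁ σ x + (1 - w) * gaussian μ₂ σ x := by
    have := gaussian_pos μ₁ σ x hσ
    have := gaussian_pos μ₂ σ x hσ
    nlinarith
  have hd : HasDerivAt (fun y => w * gaussian μ₁ σ y + (1 - w) * gaussian μ₂ σ y)
      (w * (gaussian μ₁ σ x * ((μ₁ - x) / σ ^ 2)) +
        (1 - w) * (gaussian μ₂ σ x * ((μ₂ - x) / σ ^ 2))) x :=
    ((hasDerivAt_gaussian μ₁ σ x hσ).const_mul w).add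
      ((hasDerivAt_gaussian μ₂ σ x hσ).const_mul (1 - w))
  rw [score, (hd.log hp.ne').deriv]

lemma integrand_eq (μ₁ μ₂ w σ x : ℝ) (hσ : 0 < σ) (hw : w ∈ Set.Ioo (0:ℝ) 1) :
    gaussian μ₁ σ x *
      (score (gaussian μ₁ σ) x -
        score (fun y => w * gaussian μ₁ σ y + (1 - w) * gaussian μ₂ σ y) x) ^ 2 =
    gaussian μ₁ σ x * ((1 - w) * gaussian μ₂ σ x * (μ₁ - μ₂) /
      (σ ^ 2 * (w * gaussian μ₁ σ x + (1 - w) * gaussian μ₂ σ x))) ^ 2 := by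
  obtain ⟨hw0, hw1⟩ := hw
  have h1 := gaussian_pos μ₁ σ x hσ
  have h2 := gaussian_pos μ₂ σ x hσ
  have hp : 0 < w * gaussian μ₁ σ x + (1 - w) * gaussian μ₂ σ x := by nlinarith
  rw [score_gaussian μ₁ σ x hσ, score_mix μ₁ μ₂ w σ x hσ ⟨hw0, hw1⟩]
  congr 1
  rw [div_sub_div _ _ (by positivity : (σ:ℝ)^2 ≠ 0) hp.ne']
  rw [div_pow, div_pow]
  congr 1
  · field_simp
    ring

lemma sqrt_gaussian_mul (μ₁ μ₂ σ x : ℝ) (hσ : 0 < σ) :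
    Real.sqrt (gaussian μ₁ σ x * gaussian μ₂ σ x) =
      Real.exp (-(μ₂ - μ₁) ^ 2 / (8 * σ ^ 2)) * gaussian ((μ₁ + μ₂) / 2) σ x := by
  have key : gaussian μ₁ σ x * gaussian μ₂ σ x =
      (Real.exp (-(μ₂ - μ₁) ^ 2 / (8 * σ ^ 2)) * gaussian ((μ₁ + μ₂) / 2) σ x) ^ 2 := by
    unfold gaussian
    rw [mul_mul_mul_comm, ← Real.exp_add, mul_pow, mul_pow, ← Real.exp_nat_mul,
      ← Real.exp_nat_mul, mul_left_comm, ← Real.exp_add]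
    congr 1
    · ring
    · congr 1
      push_cast
      field_simp
      ring
  rw [key, Real.sqrt_sq (mul_nonneg (Real.exp_nonneg _) (gaussian_pos _ σ x hσ).le)]

lemma integrand_le (μ₁ μ₂ w σ x : ℝ) (hσ : 0 < σ) (hw : w ∈ Set.Ioo (0:ℝ) 1) :
    gaussian μ₁ σ x * ((1 - w) * gaussian μ₂ σ x * (μ₁ - μ₂) /
      (σ ^ 2 * (w * gaussian μ₁ σ x + (1 - w) * gaussian μ₂ σ x))) ^ 2 ≤
    (μ₁ - μ₂) ^ 2 * Real.sqrt ((1 - w) / w) / σ ^ 4 *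
      Real.sqrt (gaussian μ₁ σ x * gaussian μ₂ σ x) := by
  obtain ⟨hw0, hw1⟩ := hw
  set a := gaussian μ₁ σ x with ha
  set b := gaussian μ₂ σ x with hb
  have hA : 0 < a := gaussian_pos μ₁ σ x hσ
  have hB : 0 < b := gaussian_pos μ₂ σ x hσ
  have hp : 0 < w * a + (1 - w) * b := by nlinarith
  set p := w * a + (1 - w) * b with hpdef
  have hLHS : 0 ≤ a * ((1 - w) * b * (μ₁ - μ₂) / (σ ^ 2 * p)) ^ 2 := by positivity
  have hRHS : 0 ≤ (μ₁ - μ₂) ^ 2 * Real.sqrt ((1 - w) / w) / σ ^ 4 *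
      Real.sqrt (a * b) := by positivity
  have hsq : (a * ((1 - w) * b * (μ₁ - μ₂) / (σ ^ 2 * p)) ^ 2) ^ 2 ≤
      ((μ₁ - μ₂) ^ 2 * Real.sqrt ((1 - w) / w) / σ ^ 4 * Real.sqrt (a * b)) ^ 2 := by
    have hp4 : w * a * ((1 - w) * b) ^ 3 ≤ p ^ 4 := by
      have h1 : w * a ≤ p := by nlinarith
      have h2 : (1 - w) * b ≤ p := by nlinarith
      calc w * a * ((1 - w) * b) ^ 3 ≤ p * p ^ 3 :=
            mul_le_mul h1 (pow_le_pow_left₀ (mul_nonneg (by linarith) hB.le) h2 3)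
              (pow_nonneg (mul_nonneg (by linarith) hB.le) 3) hp.le
        _ = p ^ 4 := by ring
    have hs1 : Real.sqrt ((1 - w) / w) ^ 2 = (1 - w) / w :=
      Real.sq_sqrt (div_nonneg (by linarith) hw0.le)
    have hs2 : Real.sqrt (a * b) ^ 2 = a * b := Real.sq_sqrt (mul_nonneg hA.le hB.le)
    have expand : ((μ₁ - μ₂) ^ 2 * Real.sqrt ((1 - w) / w) / σ ^ 4 * Real.sqrt (a * b)) ^ 2 =
        (μ₁ - μ₂) ^ 4 * ((1 - w) / w) / σ ^ 8 * (a * b) := by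
      rw [mul_pow, hs2, div_pow, mul_pow, hs1]
      ring
    have e1 : (a * ((1 - w) * b * (μ₁ - μ₂) / (σ ^ 2 * p)) ^ 2) ^ 2 =
        (μ₁ - μ₂) ^ 4 * (1 - w) ^ 4 * a ^ 2 * b ^ 4 / (σ ^ 8 * p ^ 4) := by
      field_simp
    have e2 : (μ₁ - μ₂) ^ 4 * ((1 - w) / w) / σ ^ 8 * (a * b) =
        (μ₁ - μ₂) ^ 4 * (1 - w) * a * b / (w * σ ^ 8) := by
      field_simp
    rw [expand, e1, e2, div_le_div_iff₀ (by positivity) (mul_pos hw0 (by positivity))]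
    nlinarith [mul_le_mul_of_nonneg_left hp4
      (mul_nonneg (mul_nonneg (mul_nonneg (mul_nonneg
        (by positivity : (0:ℝ) ≤ (μ₁ - μ₂) ^ 4) (by linarith : (0:ℝ) ≤ 1 - w)) hA.le) hB.le)
        (by positivity : (0:ℝ) ≤ σ ^ 8))]
  calc a * ((1 - w) * b * (μ₁ - μ₂) / (σ ^ 2 * p)) ^ 2
      = Real.sqrt ((a * ((1 - w) * b * (μ₁ - μ₂) / (σ ^ 2 * p)) ^ 2) ^ 2) :=
        (Real.sqrt_sq hLHS).symm
    _ ≤ Real.sqrt (((μ₁ - μ₂) ^ 2 * Real.sqrt ((1 - w) / w) / σ ^ 4 * Real.sqrt (a * b)) ^ 2) :=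
        Real.sqrt_le_sqrt hsq
    _ = _ := Real.sqrt_sq hRHS

lemma continuous_gaussian (m σ : ℝ) : Continuous (gaussian m σ) := by
  unfold gaussian
  fun_prop

lemma gaussian_eq (m σ : ℝ) (hσ : 0 < σ) :
    gaussian m σ = gaussianPDFReal m (⟨σ^2, sq_nonneg σ⟩ : NNReal) := by
  ext x
  simp only [gaussian, gaussianPDFReal, NNReal.coe_mk]
  change _ = (√(2 * Real.pi * (σ^2)))⁻¹ * Real.exp (-(x - m) ^ 2 / (2 * σ^2))
  rw [Real.sqrt_mul (by positivity) (σ^2), Real.sqrt_sq hσ.le,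
    Real.sqrt_mul (by norm_num) Real.pi]
  ring_nf

lemma integral_gaussian_one (m σ : ℝ) (hσ : 0 < σ) : ∫ x, gaussian m σ x = 1 := by
  rw [gaussian_eq m σ hσ]
  refine integral_gaussianPDFReal_eq_one m ?_
  intro h
  replace h := congrArg NNReal.toReal h
  change σ ^ 2 = 0 at h
  exact (pow_ne_zero 2 hσ.ne') h

lemma integrable_gaussian (m σ : ℝ) (hσ : 0 < σ) : Integrable (gaussian m σ) := by
  rw [gaussian_eq m σ hσ]; exact integrable_gaussianPDFReal m _

/-- blindness of score matching to isolated components in the model,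
small-variance limit: `J(q_σ ‖ p_σ) → 0` as `σ → 0⁺`. -/
theorem fisher_blind_to_isolated_components_small_variance (μ₁ μ₂ w : ℝ)
    (hμ : μ₁ < μ₂) (hw : w ∈ Set.Ioo (0 : ℝ) 1) :
    Tendsto
      (fun σ => fisherDiv (fun y => gaussian μ₁ σ y)
        (fun y => w * gaussian μ₁ σ y + (1 - w) * gaussian μ₂ σ y))
      (nhdsWithin 0 (Set.Ioi 0)) (nhds 0) := by
  obtain ⟨hw0, hw1⟩ := hw
  set K : ℝ := (μ₁ - μ₂) ^ 2 * Real.sqrt ((1 - w) / w) with hK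
  set c : ℝ := (μ₂ - μ₁) ^ 2 / 8 with hc
  have hcpos : 0 < c := by
    rw [hc]; have : 0 < μ₂ - μ₁ := by linarith
    positivity
  set φ : ℝ → ℝ := fun σ => K / σ ^ 4 * Real.exp (-(μ₂ - μ₁) ^ 2 / (8 * σ ^ 2)) with hφ
  -- Step 1: for σ > 0, the Fisher divergence is between 0 and φ σ
  have main : ∀ σ : ℝ, 0 < σ →
      0 ≤ fisherDiv (fun y => gaussian μ₁ σ y)
          (fun y => w * gaussian μ₁ σ y + (1 - w) * gaussian μ₂ σ y) ∧
      fisherDiv (fun y => gaussian μ₁ σ y)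
          (fun y => w * gaussian μ₁ σ y + (1 - w) * gaussian μ₂ σ y) ≤ φ σ := by
    intro σ hσ
    set F : ℝ → ℝ := fun x => gaussian μ₁ σ x * ((1 - w) * gaussian μ₂ σ x * (μ₁ - μ₂) /
      (σ ^ 2 * (w * gaussian μ₁ σ x + (1 - w) * gaussian μ₂ σ x))) ^ 2 with hF
    have hFnn : ∀ x, 0 ≤ F x := fun x =>
      mul_nonneg (gaussian_pos μ₁ σ x hσ).le (sq_nonneg _)
    have hfd : fisherDiv (fun y => gaussian μ₁ σ y)
        (fun y => w * gaussian μ₁ σ y + (1 - w) * gaussian μ₂ σ y) = ∫ x, F x := by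
      unfold fisherDiv
      congr 1
      funext x
      exact integrand_eq μ₁ μ₂ w σ x hσ ⟨hw0, hw1⟩
    set C : ℝ := φ σ with hC
    have hCeq : C = (μ₁ - μ₂) ^ 2 * Real.sqrt ((1 - w) / w) / σ ^ 4 *
        Real.exp (-(μ₂ - μ₁) ^ 2 / (8 * σ ^ 2)) := by
      rw [hC, hφ, hK]
    set G : ℝ → ℝ := fun x => C * gaussian ((μ₁ + μ₂) / 2) σ x with hG
    have hle : ∀ x, F x ≤ G x := by
      intro x
      refine (integrand_le μ₁ μ₂ w σ x hσ ⟨hw0, hw1⟩).trans ?_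
      rw [sqrt_gaussian_mul μ₁ μ₂ σ x hσ, hG, hCeq]
      apply le_of_eq
      ring
    have hGint : Integrable G := (integrable_gaussian _ σ hσ).const_mul C
    have hFcont : Continuous F := by
      have h1 := continuous_gaussian μ₁ σ
      have h2 := continuous_gaussian μ₂ σ
      have hp : ∀ x, σ ^ 2 * (w * gaussian μ₁ σ x + (1 - w) * gaussian μ₂ σ x) ≠ 0 := by
        intro x
        have g1 := gaussian_pos μ₁ σ x hσ
        have g2 := gaussian_pos μ₂ σ x hσ
        have : 0 < w * gaussian μ₁ σ x + (1 - w) * gaussian μ₂ σ x := by nlinarith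
        positivity
      exact h1.mul (((((((continuous_const.mul h2)).mul continuous_const).div
        (continuous_const.mul ((continuous_const.mul h1).add (continuous_const.mul h2))) hp)).pow 2))
    have hFint : Integrable F := by
      refine hGint.mono' hFcont.aestronglyMeasurable (ae_of_all _ fun x => ?_)
      rw [Real.norm_of_nonneg (hFnn x)]
      exact hle x
    constructor
    · rw [hfd]; exact integral_nonneg hFnn
    · rw [hfd]
      calc ∫ x, F x ≤ ∫ x, G x := integral_mono hFint hGint hle
        _ = C * ∫ x, gaussian ((μ₁ + μ₂) / 2) σ x := integral_const_mul _ _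
        _ = C := by rw [integral_gaussian_one _ σ hσ, mul_one]
  -- Step 2: φ → 0 as σ → 0⁺
  have hφ0 : Tendsto φ (nhdsWithin 0 (Set.Ioi 0)) (nhds 0) := by
    have h1 : Tendsto (fun σ : ℝ => (σ ^ 2)⁻¹) (nhdsWithin 0 (Set.Ioi 0)) atTop := by
      refine tendsto_inv_nhdsGT_zero.comp ?_
      refine tendsto_nhdsWithin_of_tendsto_nhds_of_eventually_within _ ?_ ?_
      · have := ((continuous_pow 2).tendsto (0:ℝ)).mono_left
          (nhdsWithin_le_nhds (s := Set.Ioi (0:ℝ)))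
        simpa using this
      · exact eventually_mem_nhdsWithin.mono fun x hx => Set.mem_Ioi.mpr (pow_pos hx 2)
    have h2 : Tendsto (fun t : ℝ => t ^ (2:ℕ) * Real.exp (-c * t)) atTop (nhds 0) := by
      have := tendsto_rpow_mul_exp_neg_mul_atTop_nhds_zero 2 c hcpos
      refine this.congr' ?_
      filter_upwards [eventually_gt_atTop (0:ℝ)] with t ht
      rw [show ((2:ℝ)) = ((2:ℕ):ℝ) by norm_num, Real.rpow_natCast]
    have h3 : Tendsto (fun σ : ℝ => K * (((σ ^ 2)⁻¹) ^ (2:ℕ) *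
        Real.exp (-c * (σ ^ 2)⁻¹))) (nhdsWithin 0 (Set.Ioi 0)) (nhds (K * 0)) :=
      (h2.comp h1).const_mul K
    rw [mul_zero] at h3
    refine h3.congr' ?_
    filter_upwards [eventually_mem_nhdsWithin] with σ (hσ : 0 < σ)
    have hσ2 : (σ:ℝ) ^ 2 ≠ 0 := by positivity
    have hB : -c * (σ ^ 2)⁻¹ = -(μ₂ - μ₁) ^ 2 / (8 * σ ^ 2) := by
      rw [hc]; field_simp
    simp only [hφ]
    rw [hB, inv_pow, ← pow_mul]
    norm_num
    ring
  -- Step 3: squeeze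
  refine squeeze_zero' ?_ ?_ hφ0
  · filter_upwards [eventually_mem_nhdsWithin] with σ (hσ : 0 < σ)
    exact (main σ hσ).1
  · filter_upwards [eventually_mem_nhdsWithin] with σ (hσ : 0 < σ)
    exact (main σ hσ).2
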